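/- Let m, n ≥ 1 and let λ_i, α_i ∈ ℂ* for i = 0,…,m and μ_j, β_j ∈ ℂ* for j = 0,…,n, with λ_0,…,λ_m pairwise distinct and μ_0,…,μ_n pairwise distinct. Then the Virasoro modules ⊗_{i=0}^m Ω(λ_i,α_i) and ⊗_{j=0}^n Ω(μ_j,β_j) are isomorphic if and only if m = n and there exists a permutation σ of {0,1,…,m} such that (λ_i, α_i) = (μ_{σ(i)}, β_{σ(i)}) for all i = 0,1,…,m. -/

import Mathlib

open TensorProduct

/-- Substitution `X_i ↦ X_i - k` (in the variable `i` only) on `ℂ[X_0,…,X_{N-1}]`. -/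
noncomputable def shiftVar {N : ℕ} (i : Fin N) (k : ℂ) :
    MvPolynomial (Fin N) ℂ →ₗ[ℂ] MvPolynomial (Fin N) ℂ :=
  (MvPolynomial.aeval fun j =>
    MvPolynomial.X j - if j = i then MvPolynomial.C k else 0).toLinearMap

/-- The operator `L_k` on `⊗_i Ω(λ_i,α_i) = ℂ[X_0,…,X_{N-1}]`. -/
noncomputable def omegaOp {N : ℕ} (lam al : Fin N → ℂ) (k : ℤ) :
    MvPolynomial (Fin N) ℂ →ₗ[ℂ] MvPolynomial (Fin N) ℂ :=
  ∑ i : Fin N, (lam i ^ k) •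
    ((LinearMap.mulLeft ℂ (MvPolynomial.X i - MvPolynomial.C ((k : ℂ) * al i))).comp
      (shiftVar i (k : ℂ)))

/-! ### Polynomial families -/

section PFam
variable {V : Type*} [AddCommGroup V] [Module ℂ V]

/-- `f : ℂ → V` is given by a polynomial expression of length `d`. -/
def PFam (d : ℕ) (f : ℂ → V) : Prop :=
  ∃ c : ℕ → V, ∀ k : ℂ, f k = ∑ t ∈ Finset.range d, k ^ t • c t

/-- `f` is a polynomial function. -/
def PF (f : ℂ → V) : Prop := ∃ d, PFam d f

lemma PFam.mono {d d' : ℕ} {f : ℂ → V} (h : d ≤ d') (hf : PFam d f) : PFam d' f := by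
  obtain ⟨c, hc⟩ := hf
  refine ⟨fun t => if t ∈ Finset.range d then c t else 0, fun k => ?_⟩
  rw [hc k, ← Finset.sum_subset (Finset.range_subset_range.2 h)
    (fun t _ ht => by simp [ht])]
  exact Finset.sum_congr rfl fun t ht => by simp [ht]

lemma PF.add {f g : ℂ → V} (hf : PF f) (hg : PF g) : PF (fun k => f k + g k) := by
  obtain ⟨d, hf⟩ := hf; obtain ⟨e, hg⟩ := hg
  obtain ⟨c, hc⟩ := hf.mono (le_max_left d e)
  obtain ⟨b, hb⟩ := hg.mono (le_max_right d e)
  exact ⟨max d e, fun t => c t + b t, fun k => by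
    simp [hc k, hb k, ← Finset.sum_add_distrib]⟩

lemma PF.map (T : V →ₗ[ℂ] V) {f : ℂ → V} (hf : PF f) : PF (fun k => T (f k)) := by
  obtain ⟨d, c, hc⟩ := hf
  exact ⟨d, fun t => T (c t), fun k => by simp [hc k]⟩

lemma PF.neg {f : ℂ → V} (hf : PF f) : PF (fun k => - f k) := by
  obtain ⟨d, c, hc⟩ := hf
  exact ⟨d, fun t => - c t, fun k => by simp [hc k]⟩

lemma PF.sub {f g : ℂ → V} (hf : PF f) (hg : PF g) : PF (fun k => f k - g k) := by
  simpa [sub_eq_add_neg] using hf.add hg.neg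

lemma PF.const (v : V) : PF (fun _ : ℂ => v) :=
  ⟨1, fun _ => v, fun k => by simp⟩

lemma PF.zero : PF (fun _ : ℂ => (0 : V)) := PF.const 0

lemma PF.smul (a : ℂ) {f : ℂ → V} (hf : PF f) : PF (fun k => a • f k) := by
  obtain ⟨d, c, hc⟩ := hf
  exact ⟨d, fun t => a • c t, fun k => by
    simp [hc k, Finset.smul_sum, smul_comm a]⟩

lemma PF.mulk {f : ℂ → V} (hf : PF f) : PF (fun k => k • f k) := by
  obtain ⟨d, c, hc⟩ := hf
  refine ⟨d + 1, fun t => if t = 0 then 0 else c (t - 1), fun k => ?_⟩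
  rw [Finset.sum_range_succ']
  simp only [if_neg (Nat.succ_ne_zero _), Nat.add_sub_cancel, if_pos rfl, smul_zero, add_zero]
  rw [hc k, Finset.smul_sum]
  simp [pow_succ', mul_smul]

lemma PF.finsum {ι : Type*} (t : Finset ι) (f : ι → ℂ → V) (h : ∀ i ∈ t, PF (f i)) :
    PF (fun z => ∑ i ∈ t, f i z) := by
  classical
  induction t using Finset.induction_on with
  | empty => simpa using PF.zero
  | insert a t' hnotmem ih =>
      have e : (fun z => ∑ i ∈ insert a t', f i z)
          = fun z => f a z + ∑ i ∈ t', f i z :=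
        funext fun z => Finset.sum_insert hnotmem
      rw [e]
      exact (h a (Finset.mem_insert_self a t')).add
        (ih fun i hi => h i (Finset.mem_insert_of_mem hi))

end PFam

/-! ### Scalar exponential-polynomial independence -/

open Polynomial in
noncomputable def dmeas (p : Polynomial ℂ) : ℕ := if p = 0 then 0 else p.natDegree + 1

section Scalar
open Polynomial

lemma dmeas_zero : dmeas 0 = 0 := if_pos rfl

lemma hn1 : (X + C (1:ℂ)).natDegree = 1 := natDegree_X_add_C 1
lemma hm1 : (X + C (1:ℂ)).Monic := monic_X_add_C 1

lemma lc_comp (r : Polynomial ℂ) : (r.comp (X + C 1)).leadingCoeff = r.leadingCoeff := by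
  rw [leadingCoeff_comp (by rw [hn1]; exact one_ne_zero), hm1.leadingCoeff, one_pow, mul_one]

lemma nd_comp (r : Polynomial ℂ) : (r.comp (X + C 1)).natDegree = r.natDegree := by
  rw [natDegree_comp, hn1, mul_one]

lemma dmeas_le (a b : ℂ) (r : Polynomial ℂ) :
    dmeas (a • r.comp (X + C 1) - b • r) ≤ dmeas r := by
  rcases eq_or_ne r 0 with rfl | hr
  · simp [dmeas]
  rcases eq_or_ne (a • r.comp (X + C 1) - b • r) 0 with h | h
  · rw [show dmeas (a • r.comp (X + C 1) - b • r) = 0 from if_pos h]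
    exact Nat.zero_le _
  rw [dmeas, if_neg h, dmeas, if_neg hr]
  have h1 : (a • r.comp (X + C 1)).natDegree ≤ r.natDegree :=
    (natDegree_smul_le _ _).trans (le_of_eq (nd_comp r))
  have h2 : (b • r).natDegree ≤ r.natDegree := natDegree_smul_le _ _
  have := natDegree_sub_le (a • r.comp (X + C 1)) (b • r)
  omega

lemma dmeas_lt (x : ℂ) (r : Polynomial ℂ) (hr : r ≠ 0) :
    dmeas (x • r.comp (X + C 1) - x • r) < dmeas r := by
  rw [← smul_sub]
  have hd : dmeas r = r.natDegree + 1 := if_neg hr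
  rcases Nat.eq_zero_or_pos r.natDegree with h0 | h0
  · obtain ⟨a, rfl⟩ := natDegree_eq_zero.1 h0
    have ha : a ≠ 0 := by simpa using hr
    rw [C_comp, sub_self, smul_zero, dmeas_zero, hd]
    omega
  · have hlc : (r.comp (X + C 1)).leadingCoeff = r.leadingCoeff := lc_comp r
    have hcne : r.comp (X + C 1) ≠ 0 := by
      intro h
      apply hr
      rwa [h, leadingCoeff_zero, eq_comm, leadingCoeff_eq_zero] at hlc
    have hndeq : (r.comp (X + C 1)).natDegree = r.natDegree := nd_comp r
    have hdeg : (r.comp (X + C 1)).degree = r.degree := by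
      rw [degree_eq_natDegree hcne, degree_eq_natDegree hr, hndeq]
    have hlt : (r.comp (X + C 1) - r).degree < r.degree :=
      hdeg ▸ degree_sub_lt hdeg hcne hlc
    rcases eq_or_ne (r.comp (X + C 1) - r) 0 with hz | hz
    · rw [hz, smul_zero, dmeas_zero, hd]; omega
    have hnd : (r.comp (X + C 1) - r).natDegree < r.natDegree :=
      natDegree_lt_natDegree hz hlt
    rcases eq_or_ne (x • (r.comp (X + C 1) - r)) 0 with hz2 | hz2
    · rw [show dmeas (x • (r.comp (X + C 1) - r)) = 0 from if_pos hz2, hd]; omega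
    rw [dmeas, if_neg hz2, hd]
    have := natDegree_smul_le x (r.comp (X + C 1) - r)
    omega

lemma smul_comp_eq_zero {a b : ℂ} {r : Polynomial ℂ} (hab : a ≠ b)
    (h : a • r.comp (X + C 1) - b • r = 0) : r = 0 := by
  by_contra hr
  have hlc : (r.comp (X + C 1)).leadingCoeff = r.leadingCoeff := lc_comp r
  have heq : a • r.comp (X + C 1) = b • r := sub_eq_zero.1 h
  have h2 : a * r.leadingCoeff = b * r.leadingCoeff := by
    have := congrArg leadingCoeff heq
    rwa [smul_eq_C_mul, smul_eq_C_mul, leadingCoeff_mul, leadingCoeff_mul,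
      leadingCoeff_C, leadingCoeff_C, hlc] at this
  have h3 : (a - b) * r.leadingCoeff = 0 := by linear_combination h2
  rcases mul_eq_zero.1 h3 with h' | h'
  · exact hab (sub_eq_zero.1 h')
  · exact hr (leadingCoeff_eq_zero.1 h')

lemma poly_zero_of_nat_roots (p : Polynomial ℂ) (h : ∀ k : ℕ, p.eval (k : ℂ) = 0) : p = 0 := by
  refine p.eq_zero_of_infinite_isRoot ?_
  exact Set.infinite_of_injective_forall_mem (f := fun k : ℕ => (k : ℂ))
    (fun a b hab => Nat.cast_injective hab) (fun k => h k)

lemma scalar_indep : ∀ (N : ℕ) (s : Finset ℂ) (p : ℂ → Polynomial ℂ),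
    (∑ x ∈ s, dmeas (p x)) + s.card ≤ N →
    (∀ x ∈ s, x ≠ (0:ℂ)) →
    (∀ k : ℕ, ∑ x ∈ s, x ^ k * (p x).eval (k : ℂ) = 0) →
    ∀ x ∈ s, p x = 0 := by
  intro N
  induction N using Nat.strong_induction_on with
  | _ N IH =>
  intro s p hmeas h0 h x hx
  by_cases hpx : p x = 0
  · exact hpx
  set q : ℂ → Polynomial ℂ := fun y => y • (p y).comp (X + C 1) - x • p y with hqdef
  have hq : ∀ k : ℕ, ∑ y ∈ s, y ^ k * (q y).eval (k : ℂ) = 0 := by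
    intro k
    have h1 := h (k + 1)
    have h2 := h k
    have : ∑ y ∈ s, y ^ k * (q y).eval (k : ℂ)
        = ∑ y ∈ s, (y ^ (k+1) * (p y).eval ((k+1 : ℕ) : ℂ) - x * (y ^ k * (p y).eval (k : ℂ))) := by
      refine Finset.sum_congr rfl fun y _ => ?_
      simp only [hqdef, eval_sub, eval_smul, eval_comp, eval_add, eval_X, eval_C, smul_eq_mul]
      push_cast
      ring
    rw [this, Finset.sum_sub_distrib, h1, ← Finset.mul_sum, h2]
    ring
  have hle : ∀ y ∈ s, dmeas (q y) ≤ dmeas (p y) := fun y _ => dmeas_le y x (p y)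
  have hlt : dmeas (q x) < dmeas (p x) := dmeas_lt x (p x) hpx
  have hmeas' : (∑ y ∈ s, dmeas (q y)) + s.card < N := by
    have : ∑ y ∈ s, dmeas (q y) < ∑ y ∈ s, dmeas (p y) :=
      Finset.sum_lt_sum hle ⟨x, hx, hlt⟩
    omega
  have hqz : ∀ y ∈ s, q y = 0 :=
    IH _ hmeas' s q le_rfl h0 hq
  have hpy : ∀ y ∈ s, y ≠ x → p y = 0 := by
    intro y hy hyx
    exact smul_comp_eq_zero hyx (hqz y hy)
  have hx0 : x ≠ 0 := h0 x hx
  have hsingle : ∀ k : ℕ, x ^ k * (p x).eval (k : ℂ) = 0 := by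
    intro k
    have := h k
    rwa [Finset.sum_eq_single x (fun y hy hyx => by rw [hpy y hy hyx]; simp)
      (fun hxs => absurd hx hxs)] at this
  have : ∀ k : ℕ, (p x).eval (k : ℂ) = 0 := by
    intro k
    exact (mul_eq_zero.1 (hsingle k)).resolve_left (pow_ne_zero _ hx0)
  exact absurd (poly_zero_of_nat_roots _ this) hpx

end Scalar

/-! ### Vector-valued independence -/

section Vec
open Polynomial
variable {V : Type*} [AddCommGroup V] [Module ℂ V]

lemma vec_indep (s : Finset ℂ) (h0 : ∀ x ∈ s, x ≠ (0:ℂ)) (D : ℕ) (c : ℂ → ℕ → V)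
    (h : ∀ k : ℕ, ∑ x ∈ s, x ^ k • ∑ t ∈ Finset.range D, (k : ℂ) ^ t • c x t = 0) :
    ∀ x ∈ s, ∀ t ∈ Finset.range D, c x t = 0 := by
  intro x hx t ht
  rw [← Module.forall_dual_apply_eq_zero_iff ℂ]
  intro f
  set p : ℂ → Polynomial ℂ := fun y => ∑ u ∈ Finset.range D, C (f (c y u)) * X ^ u with hp
  have heval : ∀ (y : ℂ) (k : ℂ), (p y).eval k = f (∑ u ∈ Finset.range D, k ^ u • c y u) := by
    intro y k
    rw [hp, map_sum, eval_finset_sum]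
    refine Finset.sum_congr rfl fun u _ => ?_
    rw [eval_mul, eval_C, eval_pow, eval_X, map_smul, smul_eq_mul, mul_comm]
  have hzero : ∀ k : ℕ, ∑ y ∈ s, y ^ k * (p y).eval (k : ℂ) = 0 := by
    intro k
    have : ∑ y ∈ s, y ^ k * (p y).eval (k : ℂ)
        = f (∑ y ∈ s, y ^ k • ∑ u ∈ Finset.range D, (k:ℂ) ^ u • c y u) := by
      rw [map_sum]
      exact Finset.sum_congr rfl fun y _ => by rw [heval, map_smul, smul_eq_mul]
    rw [this, h k, map_zero]
  have hpz := scalar_indep _ s p le_rfl h0 hzero x hx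
  have : (p x).coeff t = f (c x t) := by
    rw [hp]
    simp only [finset_sum_coeff, coeff_C_mul, coeff_X_pow]
    rw [Finset.sum_eq_single t (fun u _ hut => by simp [Ne.symm hut]) (fun hts => absurd ht hts)]
    simp
  rw [hpz, coeff_zero] at this
  exact this.symm

lemma expPoly_indep (s : Finset ℂ) (h0 : ∀ x ∈ s, x ≠ (0:ℂ)) (F : ℂ → ℂ → V)
    (hF : ∀ x ∈ s, PF (F x)) (h : ∀ k : ℕ, ∑ x ∈ s, x ^ k • F x (k : ℂ) = 0) :
    ∀ x ∈ s, ∀ z : ℂ, F x z = 0 := by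
  classical
  set d : ℂ → ℕ := fun x => if hx : PF (F x) then hx.choose else 0 with hd
  set D := s.sup d with hD
  have hPD : ∀ x ∈ s, PFam D (F x) := by
    intro x hx
    have hpf := hF x hx
    have : PFam (d x) (F x) := by
      rw [hd]; simp only [dif_pos hpf]; exact hpf.choose_spec
    exact this.mono (Finset.le_sup hx)
  set c : ℂ → ℕ → V := fun x => if hx : PFam D (F x) then hx.choose else 0 with hc
  have hcs : ∀ x ∈ s, ∀ k : ℂ, F x k = ∑ t ∈ Finset.range D, k ^ t • c x t := by
    intro x hx
    have hpd := hPD x hx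
    rw [hc]; simp only [dif_pos hpd]; exact hpd.choose_spec
  have hz := vec_indep s h0 D c (fun k => by
    rw [← h k]
    exact Finset.sum_congr rfl fun x hx => by rw [hcs x hx])
  intro x hx z
  rw [hcs x hx z]
  exact Finset.sum_eq_zero fun t ht => by rw [hz x hx t ht, smul_zero]

end Vec

/-! ### `shiftVar` facts -/

lemma PF_shift {N : ℕ} (j : Fin N) (g : MvPolynomial (Fin N) ℂ) :
    PF (fun k => shiftVar j k g) := by
  induction g using MvPolynomial.induction_on with
  | C a =>
      have e : (fun k => shiftVar j k (MvPolynomial.C a))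
          = fun _ : ℂ => (MvPolynomial.C a : MvPolynomial (Fin N) ℂ) := by
        funext k
        simp [shiftVar]
      rw [e]; exact PF.const _
  | add p q hp hq =>
      have e : (fun k => shiftVar j k (p + q))
          = fun k => shiftVar j k p + shiftVar j k q := funext fun k => map_add _ _ _
      rw [e]; exact hp.add hq
  | mul_X p l hp =>
      by_cases hl : l = j
      · subst hl
        have e : (fun k => shiftVar l k (p * MvPolynomial.X l))
            = fun k => (LinearMap.mulLeft ℂ (MvPolynomial.X l)) (shiftVar l k p)
                - k • shiftVar l k p := by
          funext k
          simp only [shiftVar, AlgHom.toLinearMap_apply, map_mul, MvPolynomial.aeval_X,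
            if_pos rfl, if_true, eq_self_iff_true, LinearMap.mulLeft_apply,
            MvPolynomial.smul_eq_C_mul]
          ring
        rw [e]
        exact (hp.map _).sub hp.mulk
      · have e : (fun k => shiftVar j k (p * MvPolynomial.X l))
            = fun k => (LinearMap.mulLeft ℂ (MvPolynomial.X l)) (shiftVar j k p) := by
          funext k
          simp only [shiftVar, AlgHom.toLinearMap_apply, map_mul, MvPolynomial.aeval_X,
            if_neg hl, LinearMap.mulLeft_apply]
          ring
        rw [e]
        exact hp.map _

lemma shiftVar_one' {N : ℕ} (j : Fin N) (k : ℂ) :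
    shiftVar j k (1 : MvPolynomial (Fin N) ℂ) = 1 := by
  rw [shiftVar, AlgHom.toLinearMap_apply, map_one]

lemma shiftVar_zero {N : ℕ} (j : Fin N) (g : MvPolynomial (Fin N) ℂ) :
    shiftVar j 0 g = g := by
  have e : (fun l => MvPolynomial.X l - if l = j then MvPolynomial.C (0:ℂ) else 0)
      = (MvPolynomial.X : Fin N → MvPolynomial (Fin N) ℂ) := by
    funext l
    by_cases h : l = j <;> simp [h]
  rw [shiftVar, AlgHom.toLinearMap_apply, e, MvPolynomial.aeval_X_left, AlgHom.id_apply]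

lemma eval_aeval' {N : ℕ} (w : Fin N → MvPolynomial (Fin N) ℂ) (y : Fin N → ℂ)
    (g : MvPolynomial (Fin N) ℂ) :
    MvPolynomial.eval y (MvPolynomial.aeval w g)
      = MvPolynomial.eval (fun l => MvPolynomial.eval y (w l)) g := by
  induction g using MvPolynomial.induction_on with
  | C a => simp
  | add p q hp hq => rw [map_add, map_add, hp, hq, map_add]
  | mul_X p l hp =>
      rw [map_mul, MvPolynomial.aeval_X, map_mul, hp, map_mul, MvPolynomial.eval_X]

lemma eval_shiftVar {N : ℕ} (j : Fin N) (z : ℂ) (g : MvPolynomial (Fin N) ℂ)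
    (y : Fin N → ℂ) :
    MvPolynomial.eval y (shiftVar j z g)
      = MvPolynomial.eval (fun l => y l - if l = j then z else 0) g := by
  rw [shiftVar, AlgHom.toLinearMap_apply, eval_aeval']
  have e : (fun l => MvPolynomial.eval y
        (MvPolynomial.X l - if l = j then MvPolynomial.C z else 0))
      = fun l => y l - if l = j then z else 0 := by
    funext l
    by_cases h : l = j <;> simp [h]
  rw [e]

lemma rename_shiftVar {N M : ℕ} (σ : Fin N ≃ Fin M) (i : Fin N) (k : ℂ)
    (f : MvPolynomial (Fin N) ℂ) :
    MvPolynomial.rename σ (shiftVar i k f) = shiftVar (σ i) k (MvPolynomial.rename σ f) := by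
  have key : (MvPolynomial.rename (σ : Fin N → Fin M)).comp
        (MvPolynomial.aeval fun j => MvPolynomial.X j - if j = i then MvPolynomial.C k else 0)
      = (MvPolynomial.aeval fun j =>
          MvPolynomial.X j - if j = σ i then MvPolynomial.C k else 0).comp
        (MvPolynomial.rename (σ : Fin N → Fin M)) := by
    apply MvPolynomial.algHom_ext
    intro l
    simp only [AlgHom.coe_comp, Function.comp_apply, MvPolynomial.aeval_X,
      MvPolynomial.rename_X, map_sub]
    by_cases hl : l = i
    · simp [hl]
    · rw [if_neg hl, if_neg (fun h => hl (σ.injective h))]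
      simp
  simpa only [shiftVar, AlgHom.toLinearMap_apply, AlgHom.coe_comp, Function.comp_apply]
    using AlgHom.congr_fun key f

/-! ### Backward direction -/

lemma backward {m : ℕ} (lam al mu be : Fin (m + 1) → ℂ)
    (σ : Fin (m + 1) ≃ Fin (m + 1)) (hσ : ∀ i, mu (σ i) = lam i ∧ be (σ i) = al i) :
    ∃ φ : MvPolynomial (Fin (m + 1)) ℂ ≃ₗ[ℂ] MvPolynomial (Fin (m + 1)) ℂ,
      ∀ (k : ℤ) (x : MvPolynomial (Fin (m + 1)) ℂ),
        φ (omegaOp lam al k x) = omegaOp mu be k (φ x) := by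
  refine ⟨(MvPolynomial.renameEquiv ℂ σ).toLinearEquiv, fun k x => ?_⟩
  simp only [omegaOp, LinearMap.sum_apply, LinearMap.smul_apply, LinearMap.coe_comp,
    Function.comp_apply, LinearMap.mulLeft_apply, AlgEquiv.toLinearEquiv_apply,
    MvPolynomial.renameEquiv_apply, map_sum, map_smul]
  rw [← Equiv.sum_comp σ (fun j => (mu j ^ k) •
    ((MvPolynomial.X j - MvPolynomial.C ((k : ℂ) * be j)) *
      (shiftVar j (k:ℂ)) (MvPolynomial.rename σ x)))]
  refine Finset.sum_congr rfl fun i _ => ?_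
  rw [(hσ i).1, (hσ i).2]
  congr 1
  rw [map_mul, rename_shiftVar σ i (k:ℂ) x]
  congr 1
  simp [map_sub]

/-! ### Main theorem -/

/-- **Lemma 4.1.** Let `m, n ≥ 1`, `λ_i, α_i ∈ ℂ*` (`i = 0,…,m`) and
`μ_j, β_j ∈ ℂ*` (`j = 0,…,n`), with `λ_0,…,λ_m` pairwise distinct and
`μ_0,…,μ_n` pairwise distinct. Then `⊗_{i=0}^m Ω(λ_i,α_i) ≅ ⊗_{j=0}^n Ω(μ_j,β_j)`
if and only if `m = n` and there is a permutation `σ` with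
`(λ_i,α_i) = (μ_{σ(i)}, β_{σ(i)})` for all `i`. -/
theorem statement8 (m n : ℕ) (hm : 1 ≤ m) (hn : 1 ≤ n)
    (lam al : Fin (m + 1) → ℂ) (mu be : Fin (n + 1) → ℂ)
    (hlam : ∀ i, lam i ≠ 0) (hal : ∀ i, al i ≠ 0)
    (hmu : ∀ j, mu j ≠ 0) (hbe : ∀ j, be j ≠ 0)
    (hlaminj : Function.Injective lam) (hmuinj : Function.Injective mu) :
    (∃ φ : MvPolynomial (Fin (m + 1)) ℂ ≃ₗ[ℂ] MvPolynomial (Fin (n + 1)) ℂ,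
        ∀ (k : ℤ) (x : MvPolynomial (Fin (m + 1)) ℂ),
          φ (omegaOp lam al k x) = omegaOp mu be k (φ x))
    ↔ (m = n ∧ ∃ σ : Fin (m + 1) ≃ Fin (n + 1),
        ∀ i, mu (σ i) = lam i ∧ be (σ i) = al i) := by
  constructor
  · rintro ⟨φ, hφ⟩
    classical
    set g : MvPolynomial (Fin (n+1)) ℂ := φ 1 with hgdef
    have hg0 : g ≠ 0 := by
      intro h
      have : (1 : MvPolynomial (Fin (m+1)) ℂ) = 0 := φ.injective (by rw [← hgdef, h, map_zero])
      exact one_ne_zero this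
    -- the key identity, from applying the intertwiner to 1
    have key : ∀ K : ℕ,
        ∑ i : Fin (m+1), (lam i ^ K) • (φ (MvPolynomial.X i) - ((K:ℂ) * al i) • g)
      = ∑ j : Fin (n+1), (mu j ^ K) •
          ((MvPolynomial.X j - MvPolynomial.C ((K:ℂ) * be j)) * shiftVar j (K:ℂ) g) := by
      intro K
      have h := hφ (K : ℤ) 1
      simp only [omegaOp, LinearMap.sum_apply, LinearMap.smul_apply, LinearMap.coe_comp,
        Function.comp_apply, LinearMap.mulLeft_apply, map_sum, map_smul,
        shiftVar_one', mul_one, zpow_natCast, Int.cast_natCast] at h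
      rw [← h]
      refine Finset.sum_congr rfl fun i _ => ?_
      congr 1
      rw [map_sub]
      congr 1
      rw [show (MvPolynomial.C ((K:ℂ) * al i) : MvPolynomial (Fin (m+1)) ℂ)
          = ((K:ℂ) * al i) • 1 by rw [MvPolynomial.smul_eq_C_mul, mul_one], map_smul, hgdef]
    -- set up the exponential-polynomial bookkeeping
    set s : Finset ℂ := Finset.image lam Finset.univ ∪ Finset.image mu Finset.univ with hs
    have hmaps_lam : ∀ i, lam i ∈ s := fun i =>
      Finset.mem_union_left _ (Finset.mem_image_of_mem lam (Finset.mem_univ i))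
    have hmaps_mu : ∀ j, mu j ∈ s := fun j =>
      Finset.mem_union_right _ (Finset.mem_image_of_mem mu (Finset.mem_univ j))
    have h0s : ∀ x ∈ s, x ≠ (0:ℂ) := by
      intro x hx
      rcases Finset.mem_union.1 hx with h | h
      · obtain ⟨i, _, rfl⟩ := Finset.mem_image.1 h; exact hlam i
      · obtain ⟨j, _, rfl⟩ := Finset.mem_image.1 h; exact hmu j
    set F : ℂ → ℂ → MvPolynomial (Fin (n+1)) ℂ := fun x z =>
      (∑ i ∈ Finset.univ.filter (fun i => lam i = x),
        (φ (MvPolynomial.X i) - (z * al i) • g))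
      - (∑ j ∈ Finset.univ.filter (fun j => mu j = x),
        (MvPolynomial.X j - MvPolynomial.C (z * be j)) * shiftVar j z g) with hF
    have hFpf : ∀ x ∈ s, PF (F x) := by
      intro x _
      refine PF.sub (PF.finsum _ _ fun i _ => ?_) (PF.finsum _ _ fun j _ => ?_)
      · refine PF.sub (PF.const _) ?_
        have e : (fun z : ℂ => (z * al i) • g) = fun z => al i • (z • g) := by
          funext z; rw [smul_smul, mul_comm]
        rw [e]
        exact ((PF.const g).mulk).smul (al i)
      · have e : (fun z : ℂ =>
              (MvPolynomial.X j - MvPolynomial.C (z * be j)) * shiftVar j z g)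
            = fun z => (LinearMap.mulLeft ℂ (MvPolynomial.X j)) (shiftVar j z g)
                - be j • (z • shiftVar j z g) := by
          funext z
          rw [sub_mul, LinearMap.mulLeft_apply]
          congr 1
          rw [← MvPolynomial.smul_eq_C_mul, smul_smul, mul_comm z (be j)]
        rw [e]
        exact ((PF_shift j g).map _).sub (((PF_shift j g).mulk).smul (be j))
    have hsum : ∀ K : ℕ, ∑ x ∈ s, x ^ K • F x (K:ℂ) = 0 := by
      intro K
      have eA : ∑ x ∈ s, x ^ K • (∑ i ∈ Finset.univ.filter (fun i => lam i = x),
          (φ (MvPolynomial.X i) - ((K:ℂ) * al i) • g))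
          = ∑ i : Fin (m+1), lam i ^ K • (φ (MvPolynomial.X i) - ((K:ℂ) * al i) • g) := by
        rw [← Finset.sum_fiberwise_of_maps_to (fun i _ => hmaps_lam i)
          (fun i => lam i ^ K • (φ (MvPolynomial.X i) - ((K:ℂ) * al i) • g))]
        refine Finset.sum_congr rfl fun x hx => ?_
        rw [Finset.smul_sum]
        exact Finset.sum_congr rfl fun i hi => by rw [(Finset.mem_filter.1 hi).2]
      have eB : ∑ x ∈ s, x ^ K • (∑ j ∈ Finset.univ.filter (fun j => mu j = x),
          (MvPolynomial.X j - MvPolynomial.C ((K:ℂ) * be j)) * shiftVar j (K:ℂ) g)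
          = ∑ j : Fin (n+1), mu j ^ K •
              ((MvPolynomial.X j - MvPolynomial.C ((K:ℂ) * be j)) * shiftVar j (K:ℂ) g) := by
        rw [← Finset.sum_fiberwise_of_maps_to (fun j _ => hmaps_mu j)
          (fun j => mu j ^ K •
            ((MvPolynomial.X j - MvPolynomial.C ((K:ℂ) * be j)) * shiftVar j (K:ℂ) g))]
        refine Finset.sum_congr rfl fun x hx => ?_
        rw [Finset.smul_sum]
        exact Finset.sum_congr rfl fun j hj => by rw [(Finset.mem_filter.1 hj).2]
      have step : ∑ x ∈ s, x ^ K • F x (K:ℂ)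
          = (∑ x ∈ s, x ^ K • (∑ i ∈ Finset.univ.filter (fun i => lam i = x),
              (φ (MvPolynomial.X i) - ((K:ℂ) * al i) • g)))
          - (∑ x ∈ s, x ^ K • (∑ j ∈ Finset.univ.filter (fun j => mu j = x),
              (MvPolynomial.X j - MvPolynomial.C ((K:ℂ) * be j)) * shiftVar j (K:ℂ) g)) := by
        rw [← Finset.sum_sub_distrib]
        refine Finset.sum_congr rfl fun x _ => ?_
        simp only [hF]
        rw [smul_sub]
      rw [step, eA, eB, key K, sub_self]
    have hvan := expPoly_indep s h0s F hFpf hsum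
    have hfl : ∀ i0 : Fin (m+1), Finset.univ.filter (fun i => lam i = lam i0) = {i0} := by
      intro i0
      ext i
      simp [hlaminj.eq_iff]
    have hfm : ∀ j0 : Fin (n+1), Finset.univ.filter (fun j => mu j = mu j0) = {j0} := by
      intro j0
      ext j
      simp [hmuinj.eq_iff]
    have hexist_mu : ∀ i, ∃ j, mu j = lam i := by
      intro i
      by_contra hne
      push_neg at hne
      have hempty : Finset.univ.filter (fun j => mu j = lam i) = ∅ :=
        Finset.filter_eq_empty_iff.2 (fun _ _ => hne _)
      have h1 := hvan (lam i) (hmaps_lam i) 0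
      simp only [hF, hfl i, hempty, Finset.sum_singleton, Finset.sum_empty, sub_zero,
        zero_mul, zero_smul] at h1
      have : (MvPolynomial.X i : MvPolynomial (Fin (m+1)) ℂ) = 0 :=
        φ.injective (h1.trans (map_zero φ).symm)
      exact MvPolynomial.X_ne_zero i this
    have hexist_lam : ∀ j, ∃ i, lam i = mu j := by
      intro j
      by_contra hne
      push_neg at hne
      have hempty : Finset.univ.filter (fun i => lam i = mu j) = ∅ :=
        Finset.filter_eq_empty_iff.2 (fun _ _ => hne _)
      have h1 := hvan (mu j) (hmaps_mu j) 0
      simp only [hF, hempty, hfm j, Finset.sum_empty, Finset.sum_singleton, zero_sub,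
        neg_eq_zero, zero_mul, MvPolynomial.C_0, sub_zero, shiftVar_zero] at h1
      rcases mul_eq_zero.1 h1 with h | h
      · exact MvPolynomial.X_ne_zero j h
      · exact hg0 h
    choose σ' hσ' using hexist_mu
    choose τ hτ using hexist_lam
    have hσ'inj : Function.Injective σ' := fun a b hab =>
      hlaminj (by rw [← hσ' a, ← hσ' b, hab])
    have hτinj : Function.Injective τ := fun a b hab =>
      hmuinj (by rw [← hτ a, ← hτ b, hab])
    have hmn : m = n := by
      have h1 := Fintype.card_le_of_injective σ' hσ'inj
      have h2 := Fintype.card_le_of_injective τ hτinj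
      simp only [Fintype.card_fin] at h1 h2
      omega
    have hbij : Function.Bijective σ' :=
      (Fintype.bijective_iff_injective_and_card σ').2 ⟨hσ'inj, by simp [hmn]⟩
    have hal_be : ∀ i, be (σ' i) = al i := by
      intro i
      by_contra hab
      have hj : mu (σ' i) = lam i := hσ' i
      have hfmu : Finset.univ.filter (fun j => mu j = lam i) = {σ' i} := by
        rw [← hj]
        exact hfm (σ' i)
      have hFz : ∀ z : ℂ, (φ (MvPolynomial.X i) - (z * al i) • g)
          - (MvPolynomial.X (σ' i) - MvPolynomial.C (z * be (σ' i)))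
              * shiftVar (σ' i) z g = 0 := by
        intro z
        have h1 := hvan (lam i) (hmaps_lam i) z
        simpa only [hF, hfl i, hfmu, Finset.sum_singleton] using h1
      have hphiX : φ (MvPolynomial.X i) = MvPolynomial.X (σ' i) * g := by
        have h1 := hFz 0
        simp only [zero_mul, zero_smul, sub_zero, MvPolynomial.C_0, shiftVar_zero] at h1
        exact sub_eq_zero.1 h1
      have hXg : MvPolynomial.X (σ' i) * g = 0 := by
        apply MvPolynomial.funext
        intro y
        rw [map_zero]
        by_cases hyj : y (σ' i) = 0
        · rw [map_mul, MvPolynomial.eval_X, hyj, zero_mul]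
        · set z := y (σ' i) / be (σ' i) with hz
          have h1 := congrArg (MvPolynomial.eval y) (hFz z)
          rw [hphiX, map_zero, map_sub, map_sub, map_mul, map_mul, map_sub,
            MvPolynomial.eval_X, MvPolynomial.eval_C,
            show ((z * al i) • g : MvPolynomial (Fin (n+1)) ℂ)
              = MvPolynomial.C (z * al i) * g from MvPolynomial.smul_eq_C_mul g _,
            map_mul, MvPolynomial.eval_C] at h1
          have hyz : y (σ' i) - z * be (σ' i) = 0 := by
            rw [hz, div_mul_cancel₀ _ (hbe (σ' i)), sub_self]
          rw [hyz, zero_mul, sub_zero] at h1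
          rw [map_mul, MvPolynomial.eval_X]
          have h2 : (y (σ' i) - z * al i) * MvPolynomial.eval y g = 0 := by
            linear_combination h1
          have hne2 : y (σ' i) - z * al i ≠ 0 := by
            rw [hz]
            intro hc
            apply hab
            have hbj := hbe (σ' i)
            field_simp at hc
            have hc' : y (σ' i) * al i = y (σ' i) * be (σ' i) := by linear_combination -hc
            exact mul_left_cancel₀ hyj hc'.symm
          rw [(mul_eq_zero.1 h2).resolve_left hne2, mul_zero]
      rcases mul_eq_zero.1 hXg with h | h
      · exact MvPolynomial.X_ne_zero _ h
      · exact hg0 h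
    exact ⟨hmn, Equiv.ofBijective σ' hbij, fun i => ⟨hσ' i, hal_be i⟩⟩
  · rintro ⟨rfl, σ, hσ⟩
    exact backward lam al mu be σ hσ
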